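/- Expected value of the chi-square statistic under a perturbed distribution: let k ≥ 1 and N ≥ 1 be natural numbers, let p : Fin k → ℝ with p_i > 0 for all i and ∑_i p_i = 1, let ε : Fin k → ℝ, and set q_i = p_i·(1 + ε_i); assume q_i ≥ 0 for all i and ∑_i q_i = 1. Let Y₁, …, Y_N be independent identically distributed random variables on a probability space, each taking values in Fin k with ℙ(Y_n = i) = q_i for all i, and for each i let z_i be the (random) number of indices n ∈ {1, …, N} with Y_n = i. Then the expectation of the chi-square statistic T = ∑_i (z_i − N·p_i)² / (N·p_i) equals (k − 1) + (N − 1)·∑_i p_i·ε_i² + ∑_i ε_i. -/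

import Mathlib

open MeasureTheory ProbabilityTheory

/-- Expected value of the chi-square statistic under a perturbed distribution:
if `Y₁, …, Y_N` are i.i.d. `Fin k`-valued with `μ(Yₙ = i) = q i = p i * (1 + ε i)`,
`z i` counts the samples equal to `i`, and
`T = ∑ i, (z i − N * p i)² / (N * p i)` is the chi-square statistic with
reference probabilities `p`, then
`𝔼 T = (k − 1) + (N − 1) * ∑ i, p i * (ε i)² + ∑ i, ε i`. -/
theorem chi_square_expectation_perturbed
    {Ω : Type*} [MeasurableSpace Ω] (μ : Measure Ω) [IsProbabilityMeasure μ]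
    (k N : ℕ) (hk : 1 ≤ k) (hN : 1 ≤ N)
    (p : Fin k → ℝ) (hp : ∀ i, 0 < p i) (hpsum : ∑ i, p i = 1)
    (ε : Fin k → ℝ) (q : Fin k → ℝ) (hq : ∀ i, q i = p i * (1 + ε i))
    (hq0 : ∀ i, 0 ≤ q i) (hqsum : ∑ i, q i = 1)
    (Y : Fin N → Ω → Fin k)
    (hmeas : ∀ n, Measurable (Y n))
    (hindep : iIndepFun Y μ)
    (hident : ∀ n m, IdentDistrib (Y n) (Y m) μ μ)
    (hdist : ∀ n i, μ {ω | Y n ω = i} = ENNReal.ofReal (q i))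
    (z : Fin k → Ω → ℕ)
    (hz : ∀ i ω, z i ω = (Finset.univ.filter fun n : Fin N => Y n ω = i).card)
    (T : Ω → ℝ)
    (hT : ∀ ω, T ω = ∑ i, ((z i ω : ℝ) - N * p i) ^ 2 / (N * p i)) :
    ∫ ω, T ω ∂μ =
      (k - 1 : ℝ) + (N - 1 : ℝ) * ∑ i, p i * ε i ^ 2 + ∑ i, ε i := by
  classical
  set f : Fin N → Fin k → Ω → ℝ := fun n i ω => if Y n ω = i then 1 else 0 with hf
  have hA : ∀ n i, MeasurableSet {ω | Y n ω = i} := fun n i =>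
    (hmeas n) (measurableSet_singleton i)
  have hfeq : ∀ n i, f n i = Set.indicator {ω | Y n ω = i} (fun _ => (1:ℝ)) := by
    intro n i; funext ω; simp [hf, Set.indicator]
  have hint_f : ∀ n i, Integrable (f n i) μ := by
    intro n i; rw [hfeq]
    exact (integrable_const (1:ℝ)).indicator (hA n i)
  have hI1 : ∀ n i, ∫ ω, f n i ω ∂μ = q i := by
    intro n i
    rw [show (fun ω => f n i ω) = f n i from rfl, hfeq, integral_indicator_const _ (hA n i),
      measureReal_def, hdist n i]
    simp [ENNReal.toReal_ofReal (hq0 i)]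
  have hprod : ∀ n m i, (fun ω => f n i ω * f m i ω) =
      Set.indicator ({ω | Y n ω = i} ∩ {ω | Y m ω = i}) (fun _ => (1:ℝ)) := by
    intro n m i; funext ω
    by_cases h1 : Y n ω = i <;> by_cases h2 : Y m ω = i <;>
      simp [hf, Set.indicator, h1, h2]
  have hint_ff : ∀ n m i, Integrable (fun ω => f n i ω * f m i ω) μ := by
    intro n m i; rw [hprod]
    exact (integrable_const (1:ℝ)).indicator ((hA n i).inter (hA m i))
  have hI2 : ∀ n m i, n ≠ m → ∫ ω, f n i ω * f m i ω ∂μ = q i ^ 2 := by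
    intro n m i hnm
    have hind : IndepFun (Y n) (Y m) μ := hindep.indepFun hnm
    have hmeasμ : μ ({ω | Y n ω = i} ∩ {ω | Y m ω = i})
        = ENNReal.ofReal (q i) * ENNReal.ofReal (q i) := by
      have hnpre : Y n ⁻¹' {i} = {ω | Y n ω = i} := by ext ω; simp
      have hmpre : Y m ⁻¹' {i} = {ω | Y m ω = i} := by ext ω; simp
      have := hind.measure_inter_preimage_eq_mul {i} {i}
        (measurableSet_singleton i) (measurableSet_singleton i)
      rw [hnpre, hmpre] at this
      rw [this, hdist n i, hdist m i]
    rw [hprod, integral_indicator_const _ ((hA n i).inter (hA m i)), measureReal_def, hmeasμ]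
    rw [← ENNReal.ofReal_mul (hq0 i)]
    rw [ENNReal.toReal_ofReal (mul_nonneg (hq0 i) (hq0 i))]
    simp [sq]
  have hI3 : ∀ n i, ∫ ω, f n i ω * f n i ω ∂μ = q i := by
    intro n i
    have : (fun ω => f n i ω * f n i ω) = f n i := by
      funext ω; by_cases h : Y n ω = i <;> simp [hf, h]
    rw [this, hI1]
  have hzsum : ∀ i ω, (z i ω : ℝ) = ∑ n, f n i ω := by
    intro i ω
    rw [hz, Finset.card_filter]
    push_cast
    simp [hf]
  have hNpos : (0:ℝ) < N := by exact_mod_cast hN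
  -- expectation of sum and of its square
  have hES : ∀ i, ∫ ω, (∑ n, f n i ω) ∂μ = N * q i := by
    intro i
    rw [integral_finset_sum _ fun n _ => hint_f n i]
    simp [hI1, mul_comm]
  have hkey : ∀ i, ∀ n m : Fin N, ∫ ω, f n i ω * f m i ω ∂μ
      = q i ^ 2 + (if n = m then q i - q i ^ 2 else 0) := by
    intro i n m
    by_cases h : n = m
    · subst h; rw [hI3]; simp
    · rw [hI2 n m i h]; simp [h]
  have hsq_eq : ∀ i, (fun ω => (∑ n, f n i ω) ^ 2)
      = fun ω => ∑ n, ∑ m, f n i ω * f m i ω := by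
    intro i; funext ω; rw [sq, Finset.sum_mul_sum]
  have hintS2 : ∀ i, Integrable (fun ω => (∑ n, f n i ω) ^ 2) μ := by
    intro i
    rw [hsq_eq]
    exact integrable_finset_sum _ fun n _ =>
      integrable_finset_sum _ fun m _ => hint_ff n m i
  have hES2 : ∀ i, ∫ ω, (∑ n, f n i ω) ^ 2 ∂μ
      = N * q i + (N * (N - 1)) * q i ^ 2 := by
    intro i
    rw [hsq_eq]
    rw [integral_finset_sum _ fun n _ =>
      integrable_finset_sum _ fun m _ => hint_ff n m i]
    have : ∀ n : Fin N, ∫ ω, (∑ m, f n i ω * f m i ω) ∂μ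
        = ∑ m, ∫ ω, f n i ω * f m i ω ∂μ := fun n =>
      integral_finset_sum _ fun m _ => hint_ff n m i
    simp_rw [this, hkey]
    have hrow : ∀ n : Fin N, (∑ m, (q i ^ 2 + if n = m then q i - q i ^ 2 else 0))
        = (N:ℝ) * q i ^ 2 + (q i - q i ^ 2) := by
      intro n
      rw [Finset.sum_add_distrib, Finset.sum_ite_eq Finset.univ n fun _ => q i - q i ^ 2,
        Finset.sum_const, Finset.card_univ, Fintype.card_fin, nsmul_eq_mul]
      simp [mul_comm]
    rw [Finset.sum_congr rfl fun n _ => hrow n, Finset.sum_const, Finset.card_univ,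
      Fintype.card_fin, nsmul_eq_mul]
    ring
  -- expectation of squared deviation
  have hdev_eq : ∀ i, (fun ω => ((z i ω : ℝ) - N * p i) ^ 2)
      = fun ω => (∑ n, f n i ω) ^ 2 - (2 * (N * p i)) * (∑ n, f n i ω) + (N * p i) ^ 2 := by
    intro i; funext ω; rw [hzsum]; ring
  have hintS : ∀ i, Integrable (fun ω => ∑ n, f n i ω) μ := fun i =>
    integrable_finset_sum _ fun n _ => hint_f n i
  have hEsq : ∀ i, ∫ ω, ((z i ω : ℝ) - N * p i) ^ 2 ∂μ
      = N * q i + (N * (N - 1)) * q i ^ 2 - 2 * (N * p i) * (N * q i) + (N * p i) ^ 2 := by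
    intro i
    have hcm : Integrable (fun ω => 2 * ((N:ℝ) * p i) * ∑ n, f n i ω) μ :=
      (hintS i).const_mul _
    have h1 : Integrable
        (fun ω => (∑ n, f n i ω) ^ 2 - 2 * ((N:ℝ) * p i) * ∑ n, f n i ω) μ :=
      (hintS2 i).sub hcm
    rw [hdev_eq]
    rw [integral_add h1 (integrable_const _)]
    rw [integral_sub (hintS2 i) hcm]
    rw [integral_const_mul, hES, hES2, integral_const]
    simp [measure_univ]
  -- split the integral of T
  have hintdev : ∀ i, Integrable (fun ω => ((z i ω : ℝ) - N * p i) ^ 2) μ := by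
    intro i
    rw [hdev_eq]
    exact (((hintS2 i).sub ((hintS i).const_mul _))).add (integrable_const _)
  have hTsum : ∫ ω, T ω ∂μ
      = ∑ i, (∫ ω, ((z i ω : ℝ) - N * p i) ^ 2 ∂μ) / (N * p i) := by
    have hTf : T = fun ω => ∑ i, ((z i ω : ℝ) - N * p i) ^ 2 / (N * p i) := funext hT
    rw [hTf, integral_finset_sum _ fun i _ => (hintdev i).div_const _]
    exact Finset.sum_congr rfl fun i _ => integral_div _ _
  rw [hTsum]
  -- algebra
  have hpε : ∑ i, p i * ε i = 0 := by
    have h : ∑ i, (p i + p i * ε i) = 1 := by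
      rw [← hqsum]
      exact Finset.sum_congr rfl fun i _ => by rw [hq]; ring
    rw [Finset.sum_add_distrib, hpsum] at h; linarith
  have hterm : ∀ i, (∫ ω, ((z i ω : ℝ) - N * p i) ^ 2 ∂μ) / (N * p i)
      = 1 + ε i + ((N:ℝ) - 1) * (p i * ε i ^ 2) - p i - 2 * (p i * ε i) := by
    intro i
    rw [hEsq i, hq i]
    have hNp : (N:ℝ) * p i ≠ 0 := ne_of_gt (mul_pos hNpos (hp i))
    have hpi : p i ≠ 0 := ne_of_gt (hp i)
    field_simp
    ring
  rw [Finset.sum_congr rfl fun i _ => hterm i]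
  simp only [Finset.sum_sub_distrib, Finset.sum_add_distrib, ← Finset.mul_sum, hpsum, hpε,
    Finset.sum_const, Finset.card_univ, Fintype.card_fin, nsmul_eq_mul, mul_one, mul_zero]
  ring
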